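/- Let n ∈ ℕ, let c : (Fin n → ℝ) → ℝ be a cost function, let U be a nonempty finite set of scenarios, and for each u ∈ U let x_u be a minimizer of c over the feasible set X u ⊆ (Fin n → ℝ). If for some u₀ ∈ U the single-scenario optimum x_{u₀} is robust, i.e., x_{u₀} ∈ ⋂_{u ∈ U} X u, then c (x_{u₀}) = max over u ∈ U of c (x_u). In words: only a single-scenario optimal solution of maximal cost can be robust. -/
import Mathlib

/-- Only a single-scenario optimal solution of maximal cost can be robust. -/
theorem robust_single_scenario_opt_has_max_cost {n : ℕ} (c : (Fin n → ℝ) → ℝ)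
    {U : Type*} [Fintype U] [Nonempty U] (X : U → Set (Fin n → ℝ))
    (x : U → (Fin n → ℝ))
    (hx_mem : ∀ u : U, x u ∈ X u)
    (hx_opt : ∀ u : U, ∀ z ∈ X u, c (x u) ≤ c z)
    (u₀ : U) (hrobust : x u₀ ∈ ⋂ u : U, X u) :
    c (x u₀) = Finset.univ.sup' Finset.univ_nonempty (fun u : U => c (x u)) := by
  apply le_antisymm
  · exact Finset.le_sup' (fun u : U => c (x u)) (Finset.mem_univ u₀)
  · apply Finset.sup'_le
    intro u _
    exact hx_opt u (x u₀) (Set.mem_iInter.mp hrobust u)
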